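/- (Key pointwise inequality in Lemma 3.2.) Fix x and u ∈ ℝᴷ with u ≠ 0, v ∈ ℝᴷ, and define φ(t) := f(x,u)·((t²−1)/2 · u + t v) + F(x,u) − F(x,t u + v) for t ≥ 0. Assume (F4): f(x,w)·w ≥ 2F(x,w) ≥ 0 for all w; (F5): F(x,w)/|w|² → ∞ as |w| → ∞; (F6): if f(x,w)·z = f(x,z)·w > 0 then F(x,w) − F(x,z) ≤ ((f(x,w)·w)² − (f(x,w)·z)²)/(2 f(x,w)·w); and that F(x,·) is C¹ with gradient f(x,·). Then φ(t) ≤ 0 for all t ≥ 0. -/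

import Mathlib

open scoped RealInnerProductSpace
open Filter

set_option maxHeartbeats 2000000 in
/-- key pointwise inequality of Lemma 3.2: under (F4), (F5), (F6),
for `u ≠ 0` and any `v`, `φ(t) ≤ 0` for all `t ≥ 0`. -/
theorem stmt12 {K : ℕ}
    (F : EuclideanSpace ℝ (Fin K) → ℝ)
    (f : EuclideanSpace ℝ (Fin K) → EuclideanSpace ℝ (Fin K))
    (hgrad : ∀ w, HasGradientAt F (f w) w) (hfcont : Continuous f)
    (hF4 : ∀ w, 2 * F w ≤ ⟪f w, w⟫ ∧ 0 ≤ F w)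
    (hF5 : Tendsto (fun w : EuclideanSpace ℝ (Fin K) => F w / ‖w‖ ^ 2)
      (cocompact (EuclideanSpace ℝ (Fin K))) atTop)
    (hF6 : ∀ w z, ⟪f w, z⟫ = ⟪f z, w⟫ → 0 < ⟪f w, z⟫ →
      F w - F z ≤ (⟪f w, w⟫ ^ 2 - ⟪f w, z⟫ ^ 2) / (2 * ⟪f w, w⟫))
    (u v : EuclideanSpace ℝ (Fin K)) (hu : u ≠ 0) :
    ∀ t : ℝ, 0 ≤ t →
      ⟪f u, ((t ^ 2 - 1) / 2) • u + t • v⟫ + F u - F (t • u + v) ≤ 0 := by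
  set a : ℝ := ⟪f u, u⟫ with ha
  set b : ℝ := ⟪f u, v⟫ with hb
  set φ : ℝ → ℝ := fun t => ((t ^ 2 - 1) / 2) * a + t * b + F u - F (t • u + v) with hφ
  have hrw : ∀ t : ℝ, ⟪f u, ((t ^ 2 - 1) / 2) • u + t • v⟫ + F u - F (t • u + v) = φ t := by
    intro t
    rw [inner_add_right, real_inner_smul_right, real_inner_smul_right]
  -- derivative of φ
  have hderiv : ∀ t : ℝ, HasDerivAt φ (t * a + b - ⟪f (t • u + v), u⟫) t := by
    intro t
    have hg : HasDerivAt (fun s : ℝ => s • u + v) u t := by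
      simpa using ((hasDerivAt_id t).smul_const u).add_const v
    have hF' : HasDerivAt (fun s : ℝ => F (s • u + v)) ⟪f (t • u + v), u⟫ t := by
      have := (hgrad (t • u + v)).hasFDerivAt.comp_hasDerivAt t hg
      simp at this
      exact this
    have h1 : HasDerivAt (fun s : ℝ => ((s ^ 2 - 1) / 2) * a) ((2 * t ^ 1 / 2) * a) t :=
      (((hasDerivAt_pow 2 t).sub_const 1).div_const 2).mul_const a
    have h2 : HasDerivAt (fun s : ℝ => s * b) b t := by
      simpa using (hasDerivAt_id t).mul_const b
    exact ((((h1.add h2).add_const (F u)).sub hF').congr_deriv (by ring))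
  have hφcont : Continuous φ := by
    rw [continuous_iff_continuousAt]
    intro t
    exact (hderiv t).continuousAt
  -- φ 0 ≤ 0
  have hφ0 : φ 0 ≤ 0 := by
    have h1 := hF4 u
    have h2 := hF4 v
    have h3 : φ 0 = -(1 / 2) * a + F u - F ((0:ℝ) • u + v) := by simp [hφ]; ring
    have h4 : (0:ℝ) • u + v = v := by simp
    rw [h3, h4]
    nlinarith [h1.1, h1.2, h2.1, h2.2]
  have hau : 0 < ‖u‖ := norm_pos_iff.mpr hu
  have ha0 : 0 ≤ a := le_trans (by nlinarith [(hF4 u).2]) (hF4 u).1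
  -- eventual bound
  obtain ⟨M, hM1, hMbound⟩ : ∃ M : ℝ, 1 ≤ M ∧ ∀ t, M ≤ t → φ t ≤ φ 0 := by
    set A : ℝ := (a + 2) / ‖u‖ ^ 2 with hA
    have hApos : 0 < A := by positivity
    have hev : ∀ᶠ w in cocompact (EuclideanSpace ℝ (Fin K)), A ≤ F w / ‖w‖ ^ 2 :=
      hF5.eventually (eventually_ge_atTop A)
    obtain ⟨C, hC, hCsub⟩ := mem_cocompact.mp hev
    obtain ⟨R, hR⟩ := hC.isBounded.subset_closedBall 0
    set R' : ℝ := max R 0 with hR'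
    have hkey : ∀ w : EuclideanSpace ℝ (Fin K), R' < ‖w‖ → A * ‖w‖ ^ 2 ≤ F w := by
      intro w hw
      have hwC : w ∈ Cᶜ := by
        intro hwc
        have h5 := hR hwc
        simp only [Metric.mem_closedBall, dist_zero_right] at h5
        have : R ≤ R' := le_max_left _ _
        linarith
      have h6 : A ≤ F w / ‖w‖ ^ 2 := hCsub hwC
      have hwpos : 0 < ‖w‖ := lt_of_le_of_lt (le_max_right R 0) hw
      exact (le_div_iff₀ (by positivity)).mp h6
    have hAu : A * ‖u‖ ^ 2 = a + 2 := by
      rw [hA]; exact div_mul_cancel₀ _ (by positivity)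
    set B : ℝ := |b| + 2 * A * ‖u‖ * ‖v‖ with hB
    refine ⟨max 1 (max ((R' + ‖v‖ + 1) / ‖u‖) ((B + |F u| + |φ 0|) / 2)), le_max_left _ _, ?_⟩
    intro t ht
    have ht1 : 1 ≤ t := le_trans (le_max_left _ _) ht
    have ht2 : R' + ‖v‖ + 1 ≤ t * ‖u‖ := by
      have := le_trans (le_trans (le_max_left _ _) (le_max_right 1 _)) ht
      calc R' + ‖v‖ + 1 = ((R' + ‖v‖ + 1) / ‖u‖) * ‖u‖ := by field_simp
        _ ≤ t * ‖u‖ := by gcongr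
    have ht3 : B + |F u| + |φ 0| ≤ 2 * t := by
      have := le_trans (le_trans (le_max_right _ _) (le_max_right 1 _)) ht
      linarith
    set N : ℝ := ‖t • u + v‖ with hN
    have hn : t * ‖u‖ - ‖v‖ ≤ N := by
      have h7 : ‖t • u‖ ≤ N + ‖v‖ := by
        have := norm_sub_le (t • u + v) v
        simpa using this
      have h8 : ‖t • u‖ = t * ‖u‖ := by
        rw [norm_smul]
        simp [abs_of_nonneg (by linarith : (0:ℝ) ≤ t)]
      linarith
    have hR'0 : 0 ≤ R' := le_max_right _ _
    have hN0 : 0 ≤ t * ‖u‖ - ‖v‖ := by nlinarith [norm_nonneg v]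
    have hRN : R' < N := by nlinarith
    have hFt : A * N ^ 2 ≤ F (t • u + v) := hkey _ hRN
    have hsq : (t * ‖u‖ - ‖v‖) ^ 2 ≤ N ^ 2 := by nlinarith
    have hAq : A * (t * ‖u‖ - ‖v‖) ^ 2 ≤ F (t • u + v) := by nlinarith
    have hexp : A * (t * ‖u‖ - ‖v‖) ^ 2
        = (a + 2) * t ^ 2 - (2 * A * ‖u‖ * ‖v‖) * t + A * ‖v‖ ^ 2 := by
      have h9 : A * (t * ‖u‖ - ‖v‖) ^ 2
          = (A * ‖u‖ ^ 2) * t ^ 2 - (2 * A * ‖u‖ * ‖v‖) * t + A * ‖v‖ ^ 2 := by ring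
      rw [h9, hAu]
    rw [hexp] at hAq
    have hAv : 0 ≤ A * ‖v‖ ^ 2 := by positivity
    have hAb : 0 ≤ 2 * A * ‖u‖ * ‖v‖ := by positivity
    show ((t ^ 2 - 1) / 2) * a + t * b + F u - F (t • u + v) ≤ φ 0
    have step1 : ((t ^ 2 - 1) / 2) * a + t * b + F u - F (t • u + v)
        ≤ -2 * t ^ 2 + B * t + |F u| := by
      nlinarith [hAq, le_abs_self (F u),
        mul_nonneg (by linarith : (0:ℝ) ≤ t) (by linarith [le_abs_self b] : (0:ℝ) ≤ |b| - b),
        mul_nonneg (sq_nonneg t) ha0, hAv, ha0]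
    have hq1 : 0 ≤ t * (2 * t - (B + |F u| + |φ 0|)) :=
      mul_nonneg (by linarith) (by linarith)
    have hq2 : 0 ≤ (t - 1) * |F u| := mul_nonneg (by linarith) (abs_nonneg _)
    have hq3 : 0 ≤ (t - 1) * |φ 0| := mul_nonneg (by linarith) (abs_nonneg _)
    have step2 : -2 * t ^ 2 + B * t + |F u| ≤ φ 0 := by
      nlinarith [neg_abs_le (φ 0)]
    exact le_trans step1 step2
  have hM0 : (0:ℝ) ≤ M := by linarith
  -- maximum on [0, M]
  obtain ⟨t₀, ht₀mem, ht₀max⟩ :=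
    (isCompact_Icc (a := (0:ℝ)) (b := M)).exists_isMaxOn
      (Set.nonempty_Icc.mpr hM0) hφcont.continuousOn
  have hglob : ∀ t : ℝ, 0 ≤ t → φ t ≤ φ t₀ := by
    intro t ht
    by_cases h : t ≤ M
    · exact ht₀max ⟨ht, h⟩
    · exact le_trans (hMbound t (by linarith)) (ht₀max ⟨le_refl 0, hM0⟩)
  suffices hmax : φ t₀ ≤ 0 by
    intro t ht
    rw [hrw t]
    exact le_trans (hglob t ht) hmax
  rcases eq_or_lt_of_le ht₀mem.1 with h0 | ht₀pos
  · rw [← h0]; exact hφ0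
  -- t₀ > 0 : interior maximum
  set z : EuclideanSpace ℝ (Fin K) := t₀ • u + v with hz
  have hloc : IsLocalMax φ t₀ := by
    filter_upwards [eventually_gt_nhds ht₀pos] with s hs
    exact hglob s hs.le
  have hzero : t₀ * a + b - ⟪f z, u⟫ = 0 := hloc.hasDerivAt_eq_zero (hderiv t₀)
  have hinner : ⟪f u, z⟫ = t₀ * a + b := by
    rw [hz, inner_add_right, real_inner_smul_right]
  set c : ℝ := ⟪f u, z⟫ with hc
  have hcomm : c = ⟪f z, u⟫ := by linarith [hinner, hzero]
  have hbc : b = c - t₀ * a := by linarith [hinner]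
  have hFz := hF4 z
  have hFu := hF4 u
  show ((t₀ ^ 2 - 1) / 2) * a + t₀ * b + F u - F z ≤ 0
  rcases le_or_gt c 0 with hcneg | hcpos
  · nlinarith [hFz.2, hFu.1, hFu.2, mul_nonneg (sq_nonneg t₀) hFu.2,
      mul_nonpos_of_nonneg_of_nonpos ht₀pos.le hcneg]
  · -- c > 0 : first a > 0
    have hapos : 0 < a := by
      rcases ha0.lt_or_eq with h | h
      · exact h
      · exfalso
        have hFu0 : F u = 0 := by nlinarith [hFu.1, hFu.2]
        -- u is a global minimum of F, so f u = 0
        have hψ : HasDerivAt (fun s : ℝ => F (s • f u + u)) ⟪f u, f u⟫ 0 := by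
          have hg : HasDerivAt (fun s : ℝ => s • f u + u) (f u) 0 := by
            simpa using ((hasDerivAt_id (0:ℝ)).smul_const (f u)).add_const u
          have := (hgrad ((0:ℝ) • f u + u)).hasFDerivAt.comp_hasDerivAt 0 hg
          simp at this ⊢
          exact this
        have hmin : IsLocalMin (fun s : ℝ => F (s • f u + u)) 0 := by
          apply Filter.Eventually.of_forall
          intro s
          simp only
          rw [show (0:ℝ) • f u + u = u by simp, hFu0]
          exact (hF4 _).2
        have hfu0 : ⟪f u, f u⟫ = 0 := hmin.hasDerivAt_eq_zero hψ
        have : f u = 0 := by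
          rwa [real_inner_self_eq_norm_sq, pow_eq_zero_iff (by norm_num), norm_eq_zero] at hfu0
        rw [hc, this, inner_zero_left] at hcpos
        exact lt_irrefl 0 hcpos
    have h6 := hF6 u z hcomm hcpos
    have h6' : (F u - F z) * (2 * a) ≤ a ^ 2 - c ^ 2 := by
      rw [← ha] at h6
      exact (le_div_iff₀ (by positivity)).mp h6
    rw [hbc]
    nlinarith [h6', sq_nonneg (t₀ * a - c), hapos, mul_pos hapos hapos]
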